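/- In the field of iterated Laurent series $K\langle\langle x_n,\dots,x_0\rangle\rangle = K((x_n))\cdots((x_0))$, for $c\in K\setminus\{0\}$ and indices $i\neq j$, the constant term with respect to $x_i$ of $1/(1-c\,x_i/x_j)$ equals $1$ if $i<j$ and $0$ if $i>j$. -/

import Mathlib

/-!
Constant terms in the field of iterated Laurent series
`K⟨⟨x_n,…,x_0⟩⟩ = K((x_n))⋯((x_0))`, modelled as the field of Hahn series over
the lexicographically ordered exponent group `Lex (Fin (n+1) → ℤ)` (exponents
compared at the smallest index first, so `x_0` is the "innermost" variable,
matching the iterated Laurent series convention).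
STATEMENT: for `c ≠ 0` and `i ≠ j`, the constant term of `1/(1 - c x_i/x_j)`
with respect to `x_i` is `1` if `i < j` and `0` if `i > j`; we express
`CT_{x_i}` coefficientwise, on exponent vectors whose `i`-th entry is `0`.
-/

set_option maxHeartbeats 1000000

noncomputable section

def wfFin (N : ℕ) : WellFoundedLT (Fin N) := inferInstance

noncomputable instance lexGrp (N : ℕ) : LinearOrder (Lex (Fin N → ℤ)) :=
  @Pi.Lex.linearOrder (Fin N) (fun _ => ℤ) _ (wfFin N) _

/-- the field of iterated Laurent series in `N` variables over `K` -/
abbrev ILS (N : ℕ) (K : Type) [Field K] : Type := HahnSeries (Lex (Fin N → ℤ)) K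

open HahnSeries

section Generic

variable {Γ : Type*} [AddCommGroup Γ] [LinearOrder Γ] [IsOrderedAddMonoid Γ] {K : Type*} [Field K]

lemma coeff_inv_one_sub_single_pos {g : Γ} {c : K} (hg : 0 < g) (hc : c ≠ 0)
    (w : Γ) (hw : ∀ k : ℕ, k ≠ 0 → w ≠ k • g) :
    ((1 - single g c)⁻¹ : HahnSeries Γ K).coeff w = if w = 0 then 1 else 0 := by
  have hx : 0 < (single g c : HahnSeries Γ K).orderTop := by
    rw [orderTop_single hc]; exact_mod_cast hg
  have hinv : ((1 - single g c)⁻¹ : HahnSeries Γ K) =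
      (SummableFamily.powers (single g c)).hsum :=
    inv_eq_of_mul_eq_one_right (SummableFamily.one_sub_self_mul_hsum_powers hx)
  rw [hinv, SummableFamily.coeff_hsum]
  rw [finsum_eq_single _ 0 (fun k hk => ?_)]
  · simp [coeff_one]
  · rw [SummableFamily.powers_of_orderTop_pos hx, single_pow, coeff_single_of_ne (hw k hk)]

lemma coeff_inv_one_sub_single_neg {g : Γ} {c : K} (hg : g < 0) (hc : c ≠ 0)
    (w : Γ) (hw : ∀ k : ℕ, w ≠ (k + 1) • (-g)) :
    ((1 - single g c)⁻¹ : HahnSeries Γ K).coeff w = 0 := by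
  have hx : 0 < (single (-g) c⁻¹ : HahnSeries Γ K).orderTop := by
    rw [orderTop_single (inv_ne_zero hc)]; exact_mod_cast neg_pos.2 hg
  have hfac : (1 - single g c : HahnSeries Γ K) =
      single g (-c) * (1 - single (-g) c⁻¹) := by
    rw [mul_sub, mul_one, single_mul_single, add_neg_cancel, neg_mul,
      mul_inv_cancel₀ hc]
    have h1 : (single (0 : Γ) (-1 : K)) = -1 := by
      ext u
      by_cases hu : u = 0 <;> simp [hu, coeff_single, coeff_one]
    have h2 : (single g (-c) : HahnSeries Γ K) = -single g c := by
      ext u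
      by_cases hu : u = g <;> simp [hu, coeff_single]
    rw [h1, h2]
    ring
  have hsinv : (single g (-c) : HahnSeries Γ K)⁻¹ = single (-g) (-c)⁻¹ := by
    apply inv_eq_of_mul_eq_one_right
    rw [single_mul_single, add_neg_cancel, mul_inv_cancel₀ (neg_ne_zero.2 hc),
      single_zero_one]
  have hinv2 : ((1 - single (-g) c⁻¹)⁻¹ : HahnSeries Γ K) =
      (SummableFamily.powers (single (-g) c⁻¹ : HahnSeries Γ K)).hsum :=
    inv_eq_of_mul_eq_one_right (SummableFamily.one_sub_self_mul_hsum_powers hx)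
  rw [hfac, mul_inv, hsinv, hinv2]
  have hcoeff : ((single (-g) (-c)⁻¹ : HahnSeries Γ K) *
      (SummableFamily.powers (single (-g) c⁻¹ : HahnSeries Γ K)).hsum).coeff ((w + g) + -g) =
      (-c)⁻¹ * ((SummableFamily.powers (single (-g) c⁻¹ : HahnSeries Γ K)).hsum).coeff (w + g) :=
    coeff_single_mul_add
  rw [show w = (w + g) + -g by abel, hcoeff, SummableFamily.coeff_hsum]
  rw [finsum_congr (fun k => ?_), finsum_zero, mul_zero]
  rw [SummableFamily.powers_of_orderTop_pos hx, single_pow, coeff_single_of_ne ?_]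
  intro h
  apply hw k
  have : w = k • (-g) + -g := by
    have := congrArg (fun u => u + -g) h
    simpa [add_assoc] using this
  rw [this, succ_nsmul']
  exact add_comm _ _

end Generic

theorem CT_one_sub_ratio {K : Type} [Field K] (n : ℕ) (c : K) (hc : c ≠ 0)
    (i j : Fin (n + 1)) (hij : i ≠ j) :
    (i < j → ∀ v : Fin (n + 1) → ℤ, v i = 0 →
      ((1 - HahnSeries.single (toLex (Pi.single i 1 - Pi.single j 1)) c)⁻¹ :
          ILS (n + 1) K).coeff (toLex v) = if v = 0 then 1 else 0) ∧
    (j < i → ∀ v : Fin (n + 1) → ℤ, v i = 0 →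
      ((1 - HahnSeries.single (toLex (Pi.single i 1 - Pi.single j 1)) c)⁻¹ :
          ILS (n + 1) K).coeff (toLex v) = 0) := by
  set g0 : Fin (n + 1) → ℤ := Pi.single i 1 - Pi.single j 1 with hg0
  have hg0i : g0 i = 1 := by
    simp [hg0, Pi.single_apply, hij, (Ne.symm hij)]
  have hsm : ∀ (k : ℕ) (a : Fin (n + 1) → ℤ), k • toLex a = toLex (k • a) := by
    intro k a
    induction k with
    | zero => rfl
    | succ m ih => rw [succ_nsmul, succ_nsmul, ih]; rfl
  constructor
  · intro hlt v hvi
    have hg : (0 : Lex (Fin (n + 1) → ℤ)) < toLex g0 := by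
      refine ⟨i, fun k hk => ?_, ?_⟩
      · have hki : k ≠ i := ne_of_lt hk
        have hkj : k ≠ j := ne_of_lt (hk.trans hlt)
        show (0:ℤ) = g0 k
        simp [hg0, Pi.single_apply, hki, hkj]
      · show (0:ℤ) < g0 i
        simp [hg0i]
    rw [coeff_inv_one_sub_single_pos hg hc (toLex v) (fun k hk h => ?_)]
    · congr 1
    · rw [hsm] at h
      have h2 := congrArg (fun w : Lex (Fin (n+1) → ℤ) => ofLex w i) h
      have h3 : v i = k • g0 i := h2
      rw [hvi, hg0i] at h3
      simp only [nsmul_eq_mul, mul_one] at h3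
      omega
  · intro hlt v hvi
    have hg : toLex g0 < 0 := by
      rw [← neg_pos]
      have hng : -toLex g0 = toLex (-g0) := rfl
      rw [hng]
      refine ⟨j, fun k hk => ?_, ?_⟩
      · have hkj : k ≠ j := ne_of_lt hk
        have hki : k ≠ i := ne_of_lt (hk.trans hlt)
        show (0:ℤ) = (-g0) k
        simp [hg0, Pi.single_apply, hki, hkj]
      · show (0:ℤ) < (-g0) j
        simp [hg0, Pi.single_apply, hij, (Ne.symm hij)]
    rw [coeff_inv_one_sub_single_neg hg hc (toLex v) (fun k h => ?_)]
    have hng : -toLex g0 = toLex (-g0) := rfl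
    rw [hng, hsm] at h
    have h2 := congrArg (fun w : Lex (Fin (n+1) → ℤ) => ofLex w i) h
    have h3 : v i = (k + 1) • (-g0) i := h2
    rw [hvi] at h3
    have h4 : (-g0) i = -1 := by rw [Pi.neg_apply, hg0i]
    rw [h4] at h3
    simp only [nsmul_eq_mul] at h3
    omega

end
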